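/- Let F be an integral binary quartic form with F(x,y) ≡ L₁(x,y)·L₂(x,y)³ (mod 16), where L₁, L₂ are linear forms over ℤ whose reductions modulo 2 are linearly independent. Then for any odd integer h, the equation F(x,y) = h has a solution in ℤ₂ (the 2-adic integers). -/

import Mathlib

open Polynomial

set_option maxHeartbeats 1000000

private lemma dvd_iff_norm' (n : ℕ) (x : ℤ_[2]) :
    (2:ℤ_[2])^n ∣ x ↔ ‖x‖ ≤ (2:ℝ)^(-(n:ℤ)) := by
  have := PadicInt.norm_le_pow_iff_mem_span_pow (p := 2) x n
  rw [Ideal.mem_span_singleton] at this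
  push_cast at this
  exact this.symm

private lemma sqrt_lemma' (u : ℤ_[2]) (hu : (2:ℤ_[2])^3 ∣ u - 1) :
    ∃ v : ℤ_[2], v^2 = u ∧ (2:ℤ_[2])^2 ∣ v - 1 := by
  set F : Polynomial ℤ_[2] := X^2 - C u with hF
  have he : F.eval 1 = 1 - u := by simp [hF]
  have hd : F.derivative = C 2 * X := by
    simp [hF, derivative_pow]
  have hd1 : F.derivative.eval 1 = 2 := by simp [hd]
  have hnorm2 : ‖(2:ℤ_[2])‖ = (2:ℝ)^(-(1:ℤ)) := by
    simpa using PadicInt.norm_p (p := 2)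
  have hnorm : ‖F.eval 1‖ < ‖F.derivative.eval 1‖ ^ 2 := by
    rw [he, hd1, hnorm2]
    have : ‖1 - u‖ ≤ (2:ℝ)^(-(3:ℤ)) := by
      have := (dvd_iff_norm' 3 (u-1)).mp hu
      rwa [← norm_neg, neg_sub] at this
    calc ‖1 - u‖ ≤ (2:ℝ)^(-(3:ℤ)) := this
      _ < ((2:ℝ)^(-(1:ℤ)))^2 := by norm_num
  obtain ⟨z, hz, hdist, -⟩ := hensels_lemma hnorm
  refine ⟨z, ?_, ?_⟩
  · have : z^2 - u = 0 := by simpa [hF] using hz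
    linear_combination this
  · rw [dvd_iff_norm']
    rw [Polynomial.coe_aeval_eq_eval, hd1, hnorm2] at hdist
    have := (PadicInt.norm_lt_pow_iff_norm_le_pow_sub_one (z - 1) (-1)).mp hdist
    norm_num at this ⊢
    convert this using 2

private lemma fourth_lemma' (u : ℤ_[2]) (hu : (2:ℤ_[2])^4 ∣ u - 1) :
    ∃ s : ℤ_[2], s^4 = u := by
  obtain ⟨c, hc⟩ := hu
  have hu8 : (2:ℤ_[2])^3 ∣ u - 1 := ⟨2*c, by rw [hc]; ring⟩
  obtain ⟨v, hv2, hvd⟩ := sqrt_lemma' u hu8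
  obtain ⟨t, ht⟩ := hvd
  have hveq : v = 1 + 4*t := by linear_combination ht
  have ht2 : t + 2*t^2 - 2*c = 0 := by
    have h8 : (8:ℤ_[2]) * (t + 2*t^2 - 2*c) = 0 := by
      have : v^2 - 1 = (2:ℤ_[2])^4 * c := by rw [hv2, hc]
      rw [hveq] at this
      linear_combination this
    have h8ne : (8:ℤ_[2]) ≠ 0 := by norm_num
    exact (mul_eq_zero.mp h8).resolve_left h8ne
  have hv8 : (2:ℤ_[2])^3 ∣ v - 1 := by
    refine ⟨c - t^2, ?_⟩
    rw [hveq]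
    linear_combination (4:ℤ_[2]) * ht2
  obtain ⟨s, hs2, -⟩ := sqrt_lemma' v hv8
  exact ⟨s, by rw [show s^4 = (s^2)^2 by ring, hs2, hv2]⟩

private lemma pow4_odd' (d : ℤ) (hd : Odd d) : ∃ m : ℤ, d^4 = 1 + 16*m := by
  obtain ⟨k, rfl⟩ := hd
  rcases Int.even_or_odd k with ⟨j, rfl⟩ | ⟨j, rfl⟩
  · exact ⟨16*j^4+16*j^3+6*j^2+j, by ring⟩
  · exact ⟨16*j^4+48*j^3+54*j^2+27*j+5, by ring⟩

/-- If `F ≡ L₁ L₂³ (mod 16)` with `L₁, L₂` independent mod `2`, then for any odd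
`h`, the equation `F(x,y) = h` has a solution in `ℤ₂`. -/
theorem quartic_represents_h_2adically (a0 a1 a2 a3 a4 α β γ δ h : ℤ)
    (hdet : Odd (α*δ - β*γ)) (hh : Odd h)
    (h0 : (16:ℤ) ∣ (a0 - α*γ^3))
    (h1 : (16:ℤ) ∣ (a1 - (3*α*γ^2*δ + β*γ^3)))
    (h2 : (16:ℤ) ∣ (a2 - (3*α*γ*δ^2 + 3*β*γ^2*δ)))
    (h3 : (16:ℤ) ∣ (a3 - (α*δ^3 + 3*β*γ*δ^2)))
    (h4 : (16:ℤ) ∣ (a4 - β*δ^3)) :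
    ∃ x y : ℤ_[2],
      (a0:ℤ_[2])*x^4 + (a1:ℤ_[2])*x^3*y + (a2:ℤ_[2])*x^2*y^2
        + (a3:ℤ_[2])*x*y^3 + (a4:ℤ_[2])*y^4 = (h:ℤ_[2]) := by
  set d : ℤ := α*δ - β*γ with hd
  set x₀ : ℤ := d^3*(δ*h - β) with hx₀
  set y₀ : ℤ := d^3*(α - γ*h) with hy₀
  obtain ⟨m, hm⟩ := pow4_odd' d hdet
  obtain ⟨b0, hb0⟩ := h0
  obtain ⟨b1, hb1⟩ := h1
  obtain ⟨b2, hb2⟩ := h2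
  obtain ⟨b3, hb3⟩ := h3
  obtain ⟨b4, hb4⟩ := h4
  set B : ℤ := b0*x₀^4 + b1*x₀^3*y₀ + b2*x₀^2*y₀^2 + b3*x₀*y₀^3 + b4*y₀^4 with hB
  have hL1 : α*x₀ + β*y₀ = d^4*h := by rw [hx₀, hy₀, hd]; ring
  have hL2 : γ*x₀ + δ*y₀ = d^4 := by rw [hx₀, hy₀, hd]; ring
  have key : a0*x₀^4 + a1*x₀^3*y₀ + a2*x₀^2*y₀^2 + a3*x₀*y₀^3 + a4*y₀^4
      = (α*x₀ + β*y₀)*(γ*x₀ + δ*y₀)^3 + 16*B := by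
    rw [hB]
    linear_combination x₀^4*hb0 + x₀^3*y₀*hb1 + x₀^2*y₀^2*hb2 + x₀*y₀^3*hb3 + y₀^4*hb4
  set c : ℤ := h*(4*m + 96*m^2 + 1024*m^3 + 4096*m^4) + B with hcdef
  have hFval : a0*x₀^4 + a1*x₀^3*y₀ + a2*x₀^2*y₀^2 + a3*x₀*y₀^3 + a4*y₀^4 = h + 16*c := by
    rw [key, hL1, hL2, hm, hcdef]
    ring
  -- move to ℤ_[2]
  have hFcast : (a0:ℤ_[2])*(x₀:ℤ_[2])^4 + (a1:ℤ_[2])*(x₀:ℤ_[2])^3*(y₀:ℤ_[2])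
      + (a2:ℤ_[2])*(x₀:ℤ_[2])^2*(y₀:ℤ_[2])^2 + (a3:ℤ_[2])*(x₀:ℤ_[2])*(y₀:ℤ_[2])^3
      + (a4:ℤ_[2])*(y₀:ℤ_[2])^4 = (h:ℤ_[2]) + 16*(c:ℤ_[2]) := by
    exact_mod_cast congrArg (fun z : ℤ => (z : ℤ_[2])) hFval
  -- h is a unit in ℤ_[2]
  have hhu : IsUnit (h:ℤ_[2]) := by
    rw [PadicInt.isUnit_iff]
    refine le_antisymm (PadicInt.norm_le_one _) ?_
    by_contra hlt
    push_neg at hlt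
    have : ((2:ℕ):ℤ) ∣ h := (PadicInt.norm_int_lt_one_iff_dvd (p := 2) h).mp hlt
    rw [Int.odd_iff] at hh
    omega
  obtain ⟨hu, hhu⟩ := hhu
  -- u = F(x₀,y₀)/h  satisfies  u ≡ 1 (mod 16)
  set u : ℤ_[2] := 1 + 16*(c:ℤ_[2])*(↑hu⁻¹ : ℤ_[2]) with hudef
  have hhinv : (h:ℤ_[2]) * (↑hu⁻¹ : ℤ_[2]) = 1 := by
    rw [← hhu]; exact hu.mul_inv
  have hudvd : (2:ℤ_[2])^4 ∣ u - 1 := ⟨(c:ℤ_[2])*(↑hu⁻¹ : ℤ_[2]), by rw [hudef]; ring⟩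
  obtain ⟨s, hs⟩ := fourth_lemma' u hudvd
  -- s is a unit
  have hsu : IsUnit s := by
    rw [PadicInt.isUnit_iff]
    have hu1 : ‖u‖ = 1 := by
      have h16 : ‖u - 1‖ ≤ (2:ℝ)^(-(4:ℤ)) := (dvd_iff_norm' 4 (u-1)).mp hudvd
      have heq : u = 1 + (u - 1) := by ring
      rw [heq, PadicInt.norm_add_eq_max_of_ne]
      · rw [norm_one, max_eq_left (h16.trans (by norm_num))]
      · intro hcon
        rw [norm_one] at hcon
        rw [← hcon] at h16
        norm_num at h16
    have h4 : ‖s‖^4 = 1 := by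
      rw [← norm_pow, hs, hu1]
    have hfac : (‖s‖ - 1) * (‖s‖^3 + ‖s‖^2 + ‖s‖ + 1) = 0 := by linear_combination h4
    rcases mul_eq_zero.mp hfac with h' | h'
    · linarith
    · nlinarith [norm_nonneg s]
  obtain ⟨w, hw⟩ := hsu
  refine ⟨(x₀:ℤ_[2]) * (↑w⁻¹ : ℤ_[2]), (y₀:ℤ_[2]) * (↑w⁻¹ : ℤ_[2]), ?_⟩
  have hwinv : s * (↑w⁻¹ : ℤ_[2]) = 1 := by
    rw [← hw]; exact w.mul_inv
  have hFu : (h:ℤ_[2]) * u = (h:ℤ_[2]) + 16*(c:ℤ_[2]) := by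
    rw [hudef]; linear_combination (16:ℤ_[2])*(c:ℤ_[2])*hhinv
  calc (a0:ℤ_[2])*((x₀:ℤ_[2])*(↑w⁻¹:ℤ_[2]))^4 + (a1:ℤ_[2])*((x₀:ℤ_[2])*(↑w⁻¹:ℤ_[2]))^3*((y₀:ℤ_[2])*(↑w⁻¹:ℤ_[2]))
        + (a2:ℤ_[2])*((x₀:ℤ_[2])*(↑w⁻¹:ℤ_[2]))^2*((y₀:ℤ_[2])*(↑w⁻¹:ℤ_[2]))^2
        + (a3:ℤ_[2])*((x₀:ℤ_[2])*(↑w⁻¹:ℤ_[2]))*((y₀:ℤ_[2])*(↑w⁻¹:ℤ_[2]))^3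
        + (a4:ℤ_[2])*((y₀:ℤ_[2])*(↑w⁻¹:ℤ_[2]))^4
      = ((a0:ℤ_[2])*(x₀:ℤ_[2])^4 + (a1:ℤ_[2])*(x₀:ℤ_[2])^3*(y₀:ℤ_[2])
        + (a2:ℤ_[2])*(x₀:ℤ_[2])^2*(y₀:ℤ_[2])^2 + (a3:ℤ_[2])*(x₀:ℤ_[2])*(y₀:ℤ_[2])^3
        + (a4:ℤ_[2])*(y₀:ℤ_[2])^4) * ((↑w⁻¹:ℤ_[2]))^4 := by ring
    _ = ((h:ℤ_[2]) + 16*(c:ℤ_[2])) * ((↑w⁻¹:ℤ_[2]))^4 := by rw [hFcast]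
    _ = (h:ℤ_[2]) * u * ((↑w⁻¹:ℤ_[2]))^4 := by rw [hFu]
    _ = (h:ℤ_[2]) * (s * (↑w⁻¹:ℤ_[2]))^4 := by rw [← hs]; ring
    _ = (h:ℤ_[2]) := by rw [hwinv]; ring
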